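/- For each n ≥ 2, the polynomial g_n(v) := F_n^{(v)}(v), regarded as a polynomial in v, is divisible by (v+1), where F_n^{(v)}(z) is defined by F_1^{(v)}(z) = 1 and F_{n+1}^{(v)}(z) = (z+1)(z−v+1) F_n^{(v)}(z+1) − z(z−v) F_n^{(v)}(z). -/

import Mathlib

open Polynomial

/-- `F_n^{(v)}(z)` as a polynomial in `z` (outer variable `X`) whose coefficients are
polynomials in `v` (inner variable): `F_1 = 1`,
`F_{n+1}(z) = (z+1)(z-v+1) F_n(z+1) - z(z-v) F_n(z)`. -/
noncomputable def FvPoly : ℕ → Polynomial (Polynomial ℚ)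
  | 0 => 1
  | 1 => 1
  | n + 2 =>
      (X + 1) * (X - C Polynomial.X + 1) * ((FvPoly (n + 1)).comp (X + 1)) -
        X * (X - C Polynomial.X) * FvPoly (n + 1)

/-- `g_n(v) = F_n^{(v)}(v)`, a polynomial in `v`. -/
noncomputable def gPoly (n : ℕ) : Polynomial ℚ := (FvPoly n).eval Polynomial.X

lemma key (n : ℕ) :
    (FvPoly (n + 2)).eval₂ (evalRingHom (-1 : ℚ)) (-1) = 0 := by
  rw [FvPoly]
  simp [eval₂_mul, eval₂_sub, eval₂_add, eval₂_one, eval₂_X, eval₂_C]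

theorem vAddOne_dvd_gPoly (n : ℕ) (hn : 2 ≤ n) : (X + 1 : Polynomial ℚ) ∣ gPoly n := by
  obtain ⟨m, rfl⟩ : ∃ m, n = m + 2 := ⟨n - 2, by omega⟩
  have h : (gPoly (m + 2)).eval (-1) = 0 := by
    have := key m
    have h2 : (evalRingHom (-1 : ℚ)) ((FvPoly (m + 2)).eval₂ (RingHom.id _) Polynomial.X)
        = (FvPoly (m + 2)).eval₂ ((evalRingHom (-1 : ℚ)).comp (RingHom.id _)) ((evalRingHom (-1 : ℚ)) Polynomial.X) :=
      Polynomial.hom_eval₂ _ _ _ _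
    show (evalRingHom (-1 : ℚ)) ((FvPoly (m + 2)).eval₂ (RingHom.id _) Polynomial.X) = 0
    rw [h2]
    simpa using this
  have h3 : (X + 1 : Polynomial ℚ) = X - C (-1) := by simp
  rw [h3, dvd_iff_isRoot]
  exact h
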